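/- For d ≥ 1 and k ≥ 1, the linear map D_k := ∂_x ⊗ ∂_y - ∂_y ⊗ ∂_x : S^k U ⊗ S^d U → S^{k-1}U ⊗ S^{d-1}U is surjective, and its kernel equals the image of the polarization map p_k : S^{d+k}U → S^k U ⊗ S^d U given by p_k(f) = ((d)!/(d+k)!)·Σ_{i=0}^{k} C(k,i) x^{k-i}y^{i} ⊗ ∂_x^{k-i}∂_y^{i}(f); in particular p_k is injective and there is a short exact sequence 0 → S^{d+k}U → S^k U ⊗ S^d U → S^{k-1}U ⊗ S^{d-1}U → 0. -/

import Mathlib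

open Module

/-- Auxiliary column-by-column construction used to show surjectivity of `D`. -/
noncomputable def stmt15aux (k d : ℕ) (N : Matrix (Fin k) (Fin d) ℂ) : ℕ → Fin (k + 1) → ℂ :=
  Nat.rec (fun _ => 0) fun b fb a =>
    if h : (a : ℕ) < k ∧ b < d then
      (N ⟨a, h.1⟩ ⟨b, h.2⟩
          + (((a : ℕ) + 1 : ℕ) : ℂ) * ((d - b : ℕ) : ℂ) * fb ⟨(a : ℕ) + 1, by omega⟩)
        / (((k - (a : ℕ) : ℕ) : ℂ) * ((b + 1 : ℕ) : ℂ))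
    else 0

lemma stmt15aux_succ (k d : ℕ) (N : Matrix (Fin k) (Fin d) ℂ) (b : ℕ) (a : Fin (k + 1)) :
    stmt15aux k d N (b + 1) a
      = if h : (a : ℕ) < k ∧ b < d then
          (N ⟨a, h.1⟩ ⟨b, h.2⟩
              + (((a : ℕ) + 1 : ℕ) : ℂ) * ((d - b : ℕ) : ℂ)
                  * stmt15aux k d N b ⟨(a : ℕ) + 1, by omega⟩)
            / (((k - (a : ℕ) : ℕ) : ℂ) * ((b + 1 : ℕ) : ℂ))
        else 0 := rfl

theorem stmt15 (d k : ℕ) (hd : 1 ≤ d) (hk : 1 ≤ k)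
    (D : Matrix (Fin (k + 1)) (Fin (d + 1)) ℂ → Matrix (Fin k) (Fin d) ℂ)
    (hD : ∀ M a b, D M a b
        = ((k - (a : ℕ) : ℕ) : ℂ) * (((b : ℕ) + 1 : ℕ) : ℂ) * M a.castSucc b.succ
          - (((a : ℕ) + 1 : ℕ) : ℂ) * ((d - (b : ℕ) : ℕ) : ℂ) * M a.succ b.castSucc)
    (p : (Fin (d + k + 1) → ℂ) → Matrix (Fin (k + 1)) (Fin (d + 1)) ℂ)
    (hp : ∀ c i b, p c i b
        = ((Nat.choose k (i : ℕ)
              * Nat.descFactorial (d + k - (b : ℕ) - (i : ℕ)) (k - (i : ℕ))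
              * Nat.descFactorial ((b : ℕ) + (i : ℕ)) (i : ℕ) : ℕ) : ℂ)
            / ((Nat.descFactorial (d + k) k : ℕ) : ℂ)
            * c (⟨(b : ℕ) + (i : ℕ), by have := b.isLt; have := i.isLt; omega⟩ :
                  Fin (d + k + 1))) :
    IsLinearMap ℂ D ∧ IsLinearMap ℂ p ∧ Function.Surjective D ∧ Function.Injective p
      ∧ {M | D M = 0} = Set.range p := by
  -- linearity of D
  have hDlin : IsLinearMap ℂ D := by
    constructor
    · intro M N; ext a b
      simp only [hD, Matrix.add_apply]
      ring
    · intro r M; ext a b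
      simp only [hD, Matrix.smul_apply, smul_eq_mul]
      ring
  have hplin : IsLinearMap ℂ p := by
    constructor
    · intro c c'; ext i b
      simp only [hp, Matrix.add_apply, Pi.add_apply]
      ring
    · intro r c; ext i b
      simp only [hp, Matrix.smul_apply, Pi.smul_apply, smul_eq_mul]
      ring
  have hdenom : ((Nat.descFactorial (d + k) k : ℕ) : ℂ) ≠ 0 := by
    rw [Ne, Nat.cast_eq_zero]
    rw [Nat.descFactorial_eq_zero_iff_lt]
    omega
  -- p kills only zero
  have hp0 : ∀ c, p c = 0 → c = 0 := by
    intro c hc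
    funext n
    have hnlt := n.isLt
    have hb : (n : ℕ) - min k (n : ℕ) < d + 1 := by omega
    have h := congrFun (congrFun hc ⟨min k (n : ℕ), by omega⟩) ⟨(n : ℕ) - min k (n : ℕ), hb⟩
    rw [hp] at h
    simp only [Matrix.zero_apply] at h
    have hidx : (⟨(n : ℕ) - min k (n : ℕ) + min k (n : ℕ), by omega⟩ : Fin (d + k + 1)) = n :=
      Fin.ext (by
        show (n : ℕ) - min k (n : ℕ) + min k (n : ℕ) = (n : ℕ)
        omega)
    rw [hidx] at h
    have hnum : ((Nat.choose k (min k (n : ℕ))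
        * Nat.descFactorial (d + k - ((n : ℕ) - min k (n : ℕ)) - min k (n : ℕ))
            (k - min k (n : ℕ))
        * Nat.descFactorial ((n : ℕ) - min k (n : ℕ) + min k (n : ℕ)) (min k (n : ℕ)) : ℕ) : ℂ)
        ≠ 0 := by
      rw [Ne, Nat.cast_eq_zero]
      simp only [Nat.mul_eq_zero, not_or]
      refine ⟨⟨?_, ?_⟩, ?_⟩
      · exact (Nat.choose_pos (min_le_left _ _)).ne'
      · rw [Nat.descFactorial_eq_zero_iff_lt]; omega
      · rw [Nat.descFactorial_eq_zero_iff_lt]; omega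
    rcases mul_eq_zero.mp h with h' | h'
    · exact absurd h' (div_ne_zero hnum hdenom)
    · simpa using h'
  have hpinj : Function.Injective p := by
    intro c c' hcc
    have hsub : p (c - c') = p c - p c' := by
      have h := map_sub (IsLinearMap.mk' p hplin) c c'
      simp only [IsLinearMap.mk'_apply] at h
      exact h
    have := hp0 (c - c') (by rw [hsub, hcc, sub_self])
    exact sub_eq_zero.mp this
  set Dl := IsLinearMap.mk' D hDlin with hDldef
  set pl := IsLinearMap.mk' p hplin with hpldef
  -- surjectivity of D
  have hDsurj : Function.Surjective D := by
    intro N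
    refine ⟨Matrix.of fun a b => stmt15aux k d N (b : ℕ) a, ?_⟩
    ext a b
    rw [hD]
    simp only [Matrix.of_apply]
    have hb := b.isLt
    have ha := a.isLt
    have h1 : stmt15aux k d N ((b.succ : Fin (d + 1)) : ℕ) a.castSucc
        = (N a b + (((a : ℕ) + 1 : ℕ) : ℂ) * ((d - (b : ℕ) : ℕ) : ℂ)
              * stmt15aux k d N (b : ℕ) ⟨(a : ℕ) + 1, by omega⟩)
            / (((k - (a : ℕ) : ℕ) : ℂ) * (((b : ℕ) + 1 : ℕ) : ℂ)) := by
      have hc : ((a.castSucc : ℕ) < k ∧ (b : ℕ) < d) := ⟨by simpa using ha, hb⟩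
      rw [show ((b.succ : Fin (d + 1)) : ℕ) = (b : ℕ) + 1 from rfl,
        stmt15aux_succ, dif_pos hc]
      congr 1
    have h2 : stmt15aux k d N (((b.castSucc : Fin (d + 1))) : ℕ) a.succ
        = stmt15aux k d N (b : ℕ) ⟨(a : ℕ) + 1, by omega⟩ := rfl
    have hX : (((k - (a : ℕ) : ℕ) : ℂ) * (((b : ℕ) + 1 : ℕ) : ℂ)) ≠ 0 := by
      refine mul_ne_zero ?_ ?_ <;> (rw [Ne, Nat.cast_eq_zero]; omega)
    have h3 : (((k - (a : ℕ) : ℕ) : ℂ) * (((b : ℕ) + 1 : ℕ) : ℂ))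
        * ((N a b + (((a : ℕ) + 1 : ℕ) : ℂ) * ((d - (b : ℕ) : ℕ) : ℂ)
              * stmt15aux k d N (b : ℕ) ⟨(a : ℕ) + 1, by omega⟩)
            / (((k - (a : ℕ) : ℕ) : ℂ) * (((b : ℕ) + 1 : ℕ) : ℂ)))
        = N a b + (((a : ℕ) + 1 : ℕ) : ℂ) * ((d - (b : ℕ) : ℕ) : ℂ)
              * stmt15aux k d N (b : ℕ) ⟨(a : ℕ) + 1, by omega⟩ := by
      rw [mul_comm]
      exact div_mul_cancel₀ _ hX
    rw [h1, h2, h3]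
    ring
  -- the key combinatorial identity
  have key : ∀ a b : ℕ, a < k → b < d →
      (k - a) * (b + 1) * (Nat.choose k a * Nat.descFactorial (d + k - (b + 1) - a) (k - a)
          * Nat.descFactorial (b + 1 + a) a)
      = (a + 1) * (d - b) * (Nat.choose k (a + 1)
          * Nat.descFactorial (d + k - b - (a + 1)) (k - (a + 1))
          * Nat.descFactorial (b + (a + 1)) (a + 1)) := by
    intro a b ha hb
    have hdesc1 : Nat.descFactorial (d + k - (b + 1) - a) (k - a)
        = (d - b) * Nat.descFactorial (d + k - b - (a + 1)) (k - (a + 1)) := by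
      have h1 : d + k - (b + 1) - a = d + k - b - (a + 1) := by omega
      have hka : k - a = (k - (a + 1)) + 1 := by omega
      rw [h1, hka, Nat.descFactorial_succ]
      congr 1
      omega
    have hdesc2 : Nat.descFactorial (b + (a + 1)) (a + 1)
        = (b + 1) * Nat.descFactorial (b + 1 + a) a := by
      have h3 : b + (a + 1) = b + 1 + a := by omega
      rw [h3, Nat.descFactorial_succ]
      congr 1
      omega
    have hc : Nat.choose k (a + 1) * (a + 1) = Nat.choose k a * (k - a) :=
      Nat.choose_succ_right_eq k a
    calc (k - a) * (b + 1) * (Nat.choose k a * Nat.descFactorial (d + k - (b + 1) - a) (k - a)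
            * Nat.descFactorial (b + 1 + a) a)
        = (Nat.choose k a * (k - a)) * ((b + 1)
            * ((d - b) * Nat.descFactorial (d + k - b - (a + 1)) (k - (a + 1)))
            * Nat.descFactorial (b + 1 + a) a) := by rw [hdesc1]; ring
      _ = (Nat.choose k (a + 1) * (a + 1)) * ((b + 1)
            * ((d - b) * Nat.descFactorial (d + k - b - (a + 1)) (k - (a + 1)))
            * Nat.descFactorial (b + 1 + a) a) := by rw [hc]
      _ = (a + 1) * (d - b) * (Nat.choose k (a + 1)
            * Nat.descFactorial (d + k - b - (a + 1)) (k - (a + 1))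
            * Nat.descFactorial (b + (a + 1)) (a + 1)) := by rw [hdesc2]; ring
  -- range p ⊆ ker D
  have hDp : ∀ c, D (p c) = 0 := by
    intro c
    ext a b
    rw [hD, hp, hp]
    simp only [Fin.coe_castSucc, Fin.val_succ, Matrix.zero_apply]
    have harg : ∀ (h1 : (b : ℕ) + 1 + (a : ℕ) < d + k + 1)
        (h2 : (b : ℕ) + ((a : ℕ) + 1) < d + k + 1),
        (⟨(b : ℕ) + 1 + (a : ℕ), h1⟩ : Fin (d + k + 1)) = ⟨(b : ℕ) + ((a : ℕ) + 1), h2⟩ := by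
      intro h1 h2
      apply Fin.ext
      show (b : ℕ) + 1 + (a : ℕ) = (b : ℕ) + ((a : ℕ) + 1)
      omega
    rw [harg _ (by omega)]
    have hkey := key (a : ℕ) (b : ℕ) a.isLt b.isLt
    have hkeyC : ((k - (a : ℕ) : ℕ) : ℂ) * (((b : ℕ) + 1 : ℕ) : ℂ)
          * ((Nat.choose k (a : ℕ)
              * Nat.descFactorial (d + k - ((b : ℕ) + 1) - (a : ℕ)) (k - (a : ℕ))
              * Nat.descFactorial ((b : ℕ) + 1 + (a : ℕ)) (a : ℕ) : ℕ) : ℂ)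
        = (((a : ℕ) + 1 : ℕ) : ℂ) * ((d - (b : ℕ) : ℕ) : ℂ)
          * ((Nat.choose k ((a : ℕ) + 1)
              * Nat.descFactorial (d + k - (b : ℕ) - ((a : ℕ) + 1)) (k - ((a : ℕ) + 1))
              * Nat.descFactorial ((b : ℕ) + ((a : ℕ) + 1)) ((a : ℕ) + 1) : ℕ) : ℂ) := by
      exact_mod_cast hkey
    rw [sub_eq_zero]
    linear_combination (c (⟨(b : ℕ) + ((a : ℕ) + 1), by omega⟩ : Fin (d + k + 1))
        / ((Nat.descFactorial (d + k) k : ℕ) : ℂ)) * hkeyC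
  -- dimension count
  have hplinj : Function.Injective pl := hpinj
  have hfin1 : finrank ℂ (LinearMap.range pl) = d + k + 1 := by
    rw [LinearMap.finrank_range_of_inj hplinj]
    simp
  have hDlsurj : Function.Surjective Dl := hDsurj
  have hfin2 : finrank ℂ (LinearMap.ker Dl) = d + k + 1 := by
    have h := LinearMap.finrank_range_add_finrank_ker Dl
    rw [LinearMap.range_eq_top.mpr hDlsurj, finrank_top] at h
    rw [Module.finrank_matrix, Module.finrank_matrix, Module.finrank_self,
      Fintype.card_fin, Fintype.card_fin, Fintype.card_fin, Fintype.card_fin] at h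
    have hcd : (k + 1) * (d + 1) * 1 = k * d * 1 + (d + k + 1) := by ring
    rw [hcd] at h
    exact Nat.add_left_cancel h
  have hle : LinearMap.range pl ≤ LinearMap.ker Dl := by
    rintro M ⟨c, rfl⟩
    simp only [LinearMap.mem_ker]
    show Dl (p c) = 0
    show D (p c) = 0
    exact hDp c
  have hker : LinearMap.range pl = LinearMap.ker Dl :=
    Submodule.eq_of_le_of_finrank_le hle (by rw [hfin1, hfin2])
  refine ⟨hDlin, hplin, hDsurj, hpinj, ?_⟩
  ext M
  simp only [Set.mem_setOf_eq, Set.mem_range]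
  constructor
  · intro h
    have hm : M ∈ LinearMap.ker Dl := by
      simp only [LinearMap.mem_ker]
      show D M = 0
      exact h
    rw [← hker] at hm
    obtain ⟨c, hc⟩ := hm
    exact ⟨c, hc⟩
  · rintro ⟨c, rfl⟩
    exact hDp c
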